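/- (Emulator segment dichotomy, Lemma 3.1) There exist absolute constants c, c' ≥ 1 such that the following holds for every Thorup–Zwick hierarchy over a finite connected simple graph G as in the context. For every integer t ≥ 7, every integer i with 0 ≤ i ≤ ℓ−2, and all vertices x, y with d_G(x,y) ≤ t^i, at least one of the following holds: (1) d_H(x,y) ≤ d_G(x,y) + c·i·t^{i−1} (the segment is successful); or (2) d_G(x, p_{i+1}(x)) ≤ c'·t^i (the segment fails). -/

import Mathlib

/-- The total weight of a walk, where `w x y` is the weight of the edge `(x,y)`. -/
noncomputable def walkWeight {V : Type} {G : SimpleGraph V} (w : V → V → ℝ) {u v : V}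
    (p : G.Walk u v) : ℝ :=
  (p.darts.map fun d => w d.toProd.1 d.toProd.2).sum

/-- The edge set of the Thorup–Zwick emulator for a hierarchy `A 0 ⊇ A 1 ⊇ ⋯` with
pivots `p` over an unweighted graph `G`: for `u ∈ A i \ A (i+1)` with `i ≤ ℓ-2`, `u` is
joined to every `v` in its bunch
`{v ∈ A i : d_G(u,v) < d_G(u, A (i+1))} ∪ {p (i+1) u}`, and all pairs of vertices of
`A (ℓ-1)` are joined. -/
def tzEdges {V : Type} (G : SimpleGraph V) (ℓ : ℕ) (A : ℕ → Set V) (p : ℕ → V → V) :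
    Set (Sym2 V) :=
  {e | ∃ u v : V, v ≠ u ∧ e = s(u, v) ∧
    ((∃ i, i ≤ ℓ - 2 ∧ u ∈ A i ∧ u ∉ A (i + 1) ∧
        ((v ∈ A i ∧ ∀ z ∈ A (i + 1), G.dist u v < G.dist u z) ∨ v = p (i + 1) u)) ∨
      (u ∈ A (ℓ - 1) ∧ v ∈ A (ℓ - 1)))}

namespace TZProof
open SimpleGraph

variable {V : Type}

/-- ℕ-valued weight of a walk in a graph `H`, where each step `(a,b)` weighs `G.dist a b`. -/
noncomputable def wtN (G : SimpleGraph V) {H : SimpleGraph V} {u v : V} (q : H.Walk u v) : ℕ :=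
  (q.darts.map fun d => G.dist d.toProd.1 d.toProd.2).sum

@[simp] lemma wtN_nil (G : SimpleGraph V) {H : SimpleGraph V} {u : V} :
    wtN G (SimpleGraph.Walk.nil : H.Walk u u) = 0 := rfl

@[simp] lemma wtN_cons (G : SimpleGraph V) {H : SimpleGraph V} {u v w : V}
    (h : H.Adj u v) (q : H.Walk v w) :
    wtN G (SimpleGraph.Walk.cons h q) = G.dist u v + wtN G q := rfl

@[simp] lemma wtN_append (G : SimpleGraph V) {H : SimpleGraph V} {u v w : V}
    (q : H.Walk u v) (r : H.Walk v w) :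
    wtN G (q.append r) = wtN G q + wtN G r := by
  simp [wtN, SimpleGraph.Walk.darts_append]

@[simp] lemma wtN_reverse (G : SimpleGraph V) {H : SimpleGraph V} {u v : V}
    (q : H.Walk u v) : wtN G q.reverse = wtN G q := by
  simp only [wtN, SimpleGraph.Walk.darts_reverse, List.map_reverse, List.sum_reverse,
    List.map_map]
  congr 1
  refine List.map_congr_left ?_
  intro d _
  simp [SimpleGraph.dist_comm]

lemma walkWeight_eq (G : SimpleGraph V) {H : SimpleGraph V} {u v : V} (q : H.Walk u v) :
    walkWeight (fun a b => (G.dist a b : ℝ)) q = (wtN G q : ℝ) := by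
  induction q with
  | nil => simp [walkWeight]
  | cons h q ih =>
      simp only [walkWeight, SimpleGraph.Walk.darts_cons, List.map_cons, List.sum_cons] at *
      rw [ih, wtN_cons]
      push_cast
      ring

lemma dist_getVert_le {G : SimpleGraph V} (hc : G.Connected) {x y : V}
    (q : G.Walk x y) (k : ℕ) : G.dist x (q.getVert k) ≤ k := by
  induction q generalizing k with
  | nil => simp [SimpleGraph.Walk.getVert, SimpleGraph.dist_self]
  | @cons a b c h q ih =>
      cases k with
      | zero => simp [SimpleGraph.Walk.getVert_zero, SimpleGraph.dist_self]
      | succ k =>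
          have h1 : G.dist a b ≤ 1 := by
            have := SimpleGraph.dist_le (SimpleGraph.Walk.cons h SimpleGraph.Walk.nil)
            simpa using this
          calc G.dist a ((SimpleGraph.Walk.cons h q).getVert (k+1))
              ≤ G.dist a b + G.dist b (q.getVert k) := hc.dist_triangle
            _ ≤ 1 + k := Nat.add_le_add h1 (ih k)
            _ = k + 1 := by omega

lemma dist_getVert_right_le {G : SimpleGraph V} {x y : V}
    (q : G.Walk x y) (k : ℕ) : G.dist (q.getVert k) y ≤ q.length - k := by
  induction q generalizing k with
  | nil => simp [SimpleGraph.Walk.getVert]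
  | @cons a b c h q ih =>
      cases k with
      | zero =>
          have := SimpleGraph.dist_le (SimpleGraph.Walk.cons h q)
          simpa using this
      | succ k =>
          have := ih k
          simpa [SimpleGraph.Walk.length_cons] using this

/-- Split a geodesic at prescribed distance `k` from `x`. -/
lemma exists_mid {G : SimpleGraph V} (hc : G.Connected) (x y : V) (k : ℕ)
    (hk : k ≤ G.dist x y) :
    ∃ b : V, G.dist x b = k ∧ G.dist x b + G.dist b y = G.dist x y := by
  obtain ⟨q, hq⟩ := hc.exists_walk_length_eq_dist x y
  refine ⟨q.getVert k, ?_, ?_⟩ <;>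
  · have h1 := dist_getVert_le hc q k
    have h2 := dist_getVert_right_le q k
    have h3 : G.dist x y ≤ G.dist x (q.getVert k) + G.dist (q.getVert k) y :=
      hc.dist_triangle
    omega

end TZProof

namespace TZProof

lemma arithA {t m d P1 la ra lb rb Q w1 w23 br w4 T0 T1 : ℕ} (ht : 7 ≤ t)
    (hT : T1 = t * T0)
    (h1 : t * w1 ≤ (t + 110 * m + 40) * P1)
    (h2 : t * w23 ≤ t * (la + rb) + 110 * m * (la + ra) + 15 * T1)
    (hbr : t * br ≤ t * (4 * T0 + la + lb))
    (h4 : t * w4 ≤ (t + 110 * m + 40) * Q + 40 * T0)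
    (heq : lb + rb = la + ra)
    (hp0 : la + ra ≤ T0)
    (hd : P1 + (la + ra) + Q = d) :
    t * (w1 + w23 + br + w4) ≤ t * d + 110 * (m + 1) * d + 40 * T1 := by
  have f1 : t * la ≤ T1 := by
    rw [hT]; exact Nat.mul_le_mul_left t (by omega)
  have f3 : 7 * T0 ≤ T1 := by rw [hT]; exact Nat.mul_le_mul_right T0 ht
  have f4 : t * (lb + rb) = t * (la + ra) := by rw [heq]
  have hsum : t * (w1 + w23 + br + w4) = t * w1 + t * w23 + t * br + t * w4 := by ring
  rw [hsum, ← hd]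
  linarith [h1, h2, hbr, h4, f1, f3, f4]

lemma arithAblocked {t m d P1 la ra lb rb Q w1 w23 w4 c1 c2 dw T0 T1 T2 : ℕ} (ht : 7 ≤ t)
    (hT : T1 = t * T0) (hT2 : T2 = t * T1)
    (h1 : t * w1 ≤ (t + 110 * m + 40) * P1)
    (h2 : t * w23 ≤ t * (la + rb) + 110 * m * (la + ra) + 15 * T1)
    (h4 : t * w4 ≤ (t + 110 * m + 40) * Q + 40 * T0)
    (hc1 : c1 ≤ dw) (hc2 : c2 ≤ dw)
    (hdw : dw ≤ 4 * T0 + la + lb)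
    (heq : lb + rb = la + ra)
    (hp0 : la + ra ≤ T0)
    (hd : P1 + (la + ra) + Q = d) :
    t * (w1 + w23 + c1 + w4 + c2) ≤ t * ((P1 + la) + (rb + Q)) + 110 * (m + 1) * d + 15 * T2 := by
  have f1 : t * la ≤ T1 := by rw [hT]; exact Nat.mul_le_mul_left t (by omega)
  have f2 : t * lb ≤ T1 := by rw [hT]; exact Nat.mul_le_mul_left t (by omega)
  have f3 : 7 * T0 ≤ T1 := by rw [hT]; exact Nat.mul_le_mul_right T0 ht
  have f5 : 7 * T1 ≤ T2 := by rw [hT2]; exact Nat.mul_le_mul_right T1 ht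
  have g1 : t * c1 ≤ t * (4 * T0 + la + lb) :=
    le_trans (Nat.mul_le_mul_left t hc1) (Nat.mul_le_mul_left t hdw)
  have g2 : t * c2 ≤ t * (4 * T0 + la + lb) :=
    le_trans (Nat.mul_le_mul_left t hc2) (Nat.mul_le_mul_left t hdw)
  have hsum : t * (w1 + w23 + c1 + w4 + c2) =
      t * w1 + t * w23 + t * c1 + t * w4 + t * c2 := by ring
  rw [hsum, ← hd]
  linarith [h1, h2, h4, g1, g2, f1, f2, f3, f5]

lemma arithB {t m d P1 la ra rb M la2 ra2 rb2 Q w1 w2 br w3 w4 T0 T1 : ℕ} (ht : 7 ≤ t)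
    (hT : T1 = t * T0)
    (h1 : t * w1 ≤ (t + 110 * m + 40) * P1)
    (h2 : t * w2 ≤ t * (la + rb) + 110 * m * (la + ra) + 15 * T1)
    (hbr : t * br ≤ t * (4 * T0 + ra + M + ra2))
    (h3 : t * w3 ≤ t * (la2 + rb2) + 110 * m * (la2 + ra2) + 15 * T1)
    (h4 : t * w4 ≤ (t + 110 * m + 40) * Q)
    (hrb : rb ≤ la + ra) (hrb2 : rb2 ≤ la2 + ra2)
    (hp0 : la + ra ≤ T0) (hp1 : la2 + ra2 ≤ T0)
    (hd : P1 + (la + ra) + M + (la2 + ra2) + Q = d) :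
    t * (w1 + w2 + br + w3 + w4) ≤ t * d + 110 * (m + 1) * d + 40 * T1 := by
  have f1 : t * rb ≤ T1 := by rw [hT]; exact Nat.mul_le_mul_left t (by omega)
  have f2 : t * rb2 ≤ T1 := by rw [hT]; exact Nat.mul_le_mul_left t (by omega)
  have f3 : 7 * T0 ≤ T1 := by rw [hT]; exact Nat.mul_le_mul_right T0 ht
  have hsum : t * (w1 + w2 + br + w3 + w4) =
      t * w1 + t * w2 + t * br + t * w3 + t * w4 := by ring
  rw [hsum, ← hd]
  linarith [h1, h2, hbr, h3, h4, f1, f2, f3, Nat.zero_le (m * M)]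

lemma arithBblocked {t m d P1 la ra rb M la2 ra2 rb2 Q w1 w2 w3 w4 c1 c2 dw T0 T1 T2 : ℕ}
    (ht : 7 ≤ t)
    (hT : T1 = t * T0) (hT2 : T2 = t * T1)
    (h1 : t * w1 ≤ (t + 110 * m + 40) * P1)
    (h2 : t * w2 ≤ t * (la + rb) + 110 * m * (la + ra) + 15 * T1)
    (h3 : t * w3 ≤ t * (la2 + rb2) + 110 * m * (la2 + ra2) + 15 * T1)
    (h4 : t * w4 ≤ (t + 110 * m + 40) * Q)
    (hc1 : c1 ≤ dw) (hc2 : c2 ≤ dw)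
    (hdw : dw ≤ 4 * T0 + ra + M + ra2)
    (hrb : rb ≤ la + ra) (hrb2 : rb2 ≤ la2 + ra2)
    (hp0 : la + ra ≤ T0) (hp1 : la2 + ra2 ≤ T0)
    (hdT : d ≤ T1)
    (hd : P1 + (la + ra) + M + (la2 + ra2) + Q = d) :
    t * (w1 + w2 + c1 + w4 + w3 + c2) ≤
      t * ((P1 + la) + (Q + la2)) + 110 * (m + 1) * d + 15 * T2 := by
  have f1 : t * rb ≤ T1 := by rw [hT]; exact Nat.mul_le_mul_left t (by omega)
  have f2 : t * rb2 ≤ T1 := by rw [hT]; exact Nat.mul_le_mul_left t (by omega)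
  have f3 : 7 * T0 ≤ T1 := by rw [hT]; exact Nat.mul_le_mul_right T0 ht
  have f5 : 7 * T1 ≤ T2 := by rw [hT2]; exact Nat.mul_le_mul_right T1 ht
  have f6 : t * (ra + M + ra2) ≤ T2 := by
    rw [hT2]; exact Nat.mul_le_mul_left t (by omega)
  have g1 : t * c1 ≤ t * (4 * T0 + ra + M + ra2) :=
    le_trans (Nat.mul_le_mul_left t hc1) (Nat.mul_le_mul_left t hdw)
  have g2 : t * c2 ≤ t * (4 * T0 + ra + M + ra2) :=
    le_trans (Nat.mul_le_mul_left t hc2) (Nat.mul_le_mul_left t hdw)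
  have hsum : t * (w1 + w2 + c1 + w4 + w3 + c2) =
      t * w1 + t * w2 + t * c1 + t * w4 + t * w3 + t * c2 := by ring
  rw [hsum, ← hd]
  linarith [h1, h2, h3, h4, g1, g2, f1, f2, f3, f5, f6, Nat.zero_le (m * M)]

end TZProof

section Hier
open SimpleGraph
set_option linter.unusedSectionVars false

variable {V : Type} {G : SimpleGraph V} (hc : G.Connected)
  {ℓ : ℕ} (hl : 2 ≤ ℓ) {A : ℕ → Set V} (hA0 : A 0 = Set.univ)
  {p : ℕ → V → V}
  (hp : ∀ i, 1 ≤ i → i ≤ ℓ - 1 → ∀ v : V,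
      p i v ∈ A i ∧ ∀ z ∈ A i, G.dist v (p i v) ≤ G.dist v z)
  {t : ℕ} (ht : 7 ≤ t)


lemma adj_bunch {i : ℕ} (hi : i ≤ ℓ - 2) {u v : V} (hu : u ∈ A i) (hu' : u ∉ A (i + 1))
    (hv : v ∈ A i) (hne : v ≠ u) (hlt : ∀ z ∈ A (i + 1), G.dist u v < G.dist u z) :
    (SimpleGraph.fromEdgeSet (tzEdges G ℓ A p)).Adj u v := by
  rw [SimpleGraph.fromEdgeSet_adj]
  exact ⟨⟨u, v, hne, rfl, Or.inl ⟨i, hi, hu, hu', Or.inl ⟨hv, hlt⟩⟩⟩, hne.symm⟩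

lemma adj_pivot {i : ℕ} (hi : i ≤ ℓ - 2) {u : V} (hu : u ∈ A i) (hu' : u ∉ A (i + 1))
    (hne : p (i + 1) u ≠ u) : (SimpleGraph.fromEdgeSet (tzEdges G ℓ A p)).Adj u (p (i + 1) u) := by
  rw [SimpleGraph.fromEdgeSet_adj]
  exact ⟨⟨u, p (i + 1) u, hne, rfl, Or.inl ⟨i, hi, hu, hu', Or.inr rfl⟩⟩, hne.symm⟩

include hc hl hA0 hp ht in
/-- One climbing step: from `v ∈ A j`, given some `ζ ∈ A (j+1)`, we can reach a vertex of
`A (j+1)` by at most one emulator edge, of weight (and displacement) at most `dist v ζ`. -/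
lemma climb_step {j : ℕ} (hj : j ≤ ℓ - 2) {v ζ : V} (hv : v ∈ A j) (hζ : ζ ∈ A (j + 1)) :
    ∃ w ∈ A (j + 1), G.dist v w ≤ G.dist v ζ ∧
      ∃ q : (SimpleGraph.fromEdgeSet (tzEdges G ℓ A p)).Walk v w, TZProof.wtN G q ≤ G.dist v ζ := by
  by_cases hmem : v ∈ A (j + 1)
  · exact ⟨v, hmem, by simp [SimpleGraph.dist_self], SimpleGraph.Walk.nil, by simp⟩
  · have hj1 : 1 ≤ j + 1 := by omega
    have hj2 : j + 1 ≤ ℓ - 1 := by omega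
    obtain ⟨hpw, hopt⟩ := hp (j + 1) hj1 hj2 v
    have hne : p (j + 1) v ≠ v := fun h => hmem (h ▸ hpw)
    refine ⟨p (j + 1) v, hpw, hopt ζ hζ, SimpleGraph.Walk.cons (adj_pivot hj hv hmem hne)
      SimpleGraph.Walk.nil, ?_⟩
    simpa using hopt ζ hζ


/-- Success bound (scaled by `t`): the walk's weight `w` satisfies
`t·w ≤ t·d + 110·m·d + (m = 0 ? 0 : 40·t^m)`. -/
abbrev GoodPair (m : ℕ) (x y : V) : Prop :=
  ∃ q : (SimpleGraph.fromEdgeSet (tzEdges G ℓ A p)).Walk x y,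
    t * TZProof.wtN G q ≤ t * G.dist x y + 110 * m * G.dist x y +
      (if m = 0 then 0 else 40 * t ^ m)

/-- Failure data at level `m`: two anchors `a`, `b` on a geodesic from `x` to `y`, two
vertices `w, w'` of `A (m+1)` close to them, and emulator walks from `x` resp. `y` to them
with controlled total weight. -/
abbrev FailPair (m : ℕ) (x y : V) : Prop :=
  ∃ a b w w' : V, ∃ qL : (SimpleGraph.fromEdgeSet (tzEdges G ℓ A p)).Walk x w,
    ∃ qR : (SimpleGraph.fromEdgeSet (tzEdges G ℓ A p)).Walk y w',
    G.dist x a + G.dist a y = G.dist x y ∧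
    G.dist x b + G.dist b y = G.dist x y ∧
    w ∈ A (m + 1) ∧ w' ∈ A (m + 1) ∧
    G.dist a w ≤ 2 * t ^ m ∧ G.dist b w' ≤ 2 * t ^ m ∧
    t * (TZProof.wtN G qL + TZProof.wtN G qR) ≤
      t * (G.dist x a + G.dist b y) + 110 * m * G.dist x y + 15 * t ^ (m + 1)

abbrev Claim (m : ℕ) : Prop :=
  ∀ x y : V, G.dist x y ≤ t ^ m →
    GoodPair (G := G) (ℓ := ℓ) (A := A) (p := p) (t := t) m x y ∨
    FailPair (G := G) (ℓ := ℓ) (A := A) (p := p) (t := t) m x y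


include hc hl hA0 hp ht in
lemma claim_zero : Claim (G := G) (ℓ := ℓ) (A := A) (p := p) (t := t) 0 := by
  intro x y hd
  have hA0x : x ∈ A 0 := by rw [hA0]; trivial
  have hA0y : y ∈ A 0 := by rw [hA0]; trivial
  by_cases hxy : x = y
  · subst hxy
    left
    exact ⟨SimpleGraph.Walk.nil, by simp⟩
  · have hd1 : G.dist x y = 1 := by
      have := hc.pos_dist_of_ne hxy
      exact le_antisymm (by simpa using hd) this
    have h02 : (0 : ℕ) ≤ ℓ - 2 := Nat.zero_le _
    have hp0 : t ^ 0 = 1 := pow_zero t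
    have hp1 : t ^ 1 = t := pow_one t
    have hp01 : t ^ (0 + 1) = t := by rw [zero_add, pow_one]
    by_cases hx1 : x ∈ A 1
    · -- fail, x itself is in A 1
      obtain ⟨w, hwA, hwd, qL, hqL⟩ := climb_step hc hl hA0 hp ht h02 hA0x hx1
      obtain ⟨w', hw'A, hw'd, qR, hqR⟩ := climb_step hc hl hA0 hp ht h02 hA0y hx1
      right
      refine ⟨x, y, w, w', qL, qR, by simp [SimpleGraph.dist_self, hd1],
        by simp [SimpleGraph.dist_self, hd1], hwA, hw'A, ?_, ?_, ?_⟩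
      · have h0 : G.dist x x = 0 := SimpleGraph.dist_self
        omega
      · have : G.dist y x = 1 := by rwa [SimpleGraph.dist_comm] at hd1
        omega
      · have h1 : G.dist x x = 0 := SimpleGraph.dist_self
        have h2 : G.dist y x = 1 := by rwa [SimpleGraph.dist_comm] at hd1
        have h3 : G.dist y y = 0 := SimpleGraph.dist_self
        have e1 : TZProof.wtN G qL = 0 := by omega
        have e2 : TZProof.wtN G qR ≤ 1 := by omega
        have hm : t * (TZProof.wtN G qL + TZProof.wtN G qR) ≤ t * 1 := by
          apply Nat.mul_le_mul_left; omega
        omega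
    · by_cases hblock : ∃ z ∈ A 1, G.dist x z ≤ 1
      · obtain ⟨z, hzA, hz⟩ := hblock
        obtain ⟨w, hwA, hwd, qL, hqL⟩ := climb_step hc hl hA0 hp ht h02 hA0x hzA
        have hyz : G.dist y z ≤ 2 := by
          have := hc.dist_triangle (u := y) (v := x) (w := z)
          have : G.dist y x = 1 := by rwa [SimpleGraph.dist_comm] at hd1
          omega
        obtain ⟨w', hw'A, hw'd, qR, hqR⟩ := climb_step hc hl hA0 hp ht h02 hA0y hzA
        right
        refine ⟨x, y, w, w', qL, qR, by simp [SimpleGraph.dist_self, hd1],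
          by simp [SimpleGraph.dist_self, hd1], hwA, hw'A, by omega, ?_, ?_⟩
        · have := hc.dist_triangle (u := y) (v := x) (w := z)
          have hyx : G.dist y x = 1 := by rwa [SimpleGraph.dist_comm] at hd1
          omega
        · have h1 : G.dist x x = 0 := SimpleGraph.dist_self
          have h3 : G.dist y y = 0 := SimpleGraph.dist_self
          have hyx : G.dist y x = 1 := by rwa [SimpleGraph.dist_comm] at hd1
          have := hc.dist_triangle (u := y) (v := x) (w := z)
          have e1 : TZProof.wtN G qL ≤ 1 := by omega
          have e2 : TZProof.wtN G qR ≤ 2 := by omega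
          have hm : t * (TZProof.wtN G qL + TZProof.wtN G qR) ≤ t * 3 := by
            apply Nat.mul_le_mul_left; omega
          omega
      · left
        push_neg at hblock
        have hlt : ∀ z ∈ A 1, G.dist x y < G.dist x z := by
          intro z hz
          have := hblock z hz
          omega
        have hadj : (SimpleGraph.fromEdgeSet (tzEdges G ℓ A p)).Adj x y :=
          adj_bunch (G := G) (i := 0) h02 hA0x hx1 hA0y (Ne.symm hxy) hlt
        refine ⟨SimpleGraph.Walk.cons hadj SimpleGraph.Walk.nil, ?_⟩
        simp


include hc hl hA0 hp ht in
lemma march {m : ℕ} (hcl : Claim (G := G) (ℓ := ℓ) (A := A) (p := p) (t := t) m) :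
    ∀ n x y, G.dist x y = n → G.dist x y ≤ t ^ (m + 1) →
    (∃ q : (SimpleGraph.fromEdgeSet (tzEdges G ℓ A p)).Walk x y,
        t * TZProof.wtN G q ≤ (t + 110 * m + 40) * G.dist x y + 40 * t ^ m) ∨
    (∃ u₀ v₀ : V, ∃ pre : (SimpleGraph.fromEdgeSet (tzEdges G ℓ A p)).Walk x u₀,
        G.dist x u₀ + G.dist u₀ y = G.dist x y ∧
        G.dist u₀ v₀ + G.dist v₀ y = G.dist u₀ y ∧
        G.dist u₀ v₀ ≤ t ^ m ∧
        t * TZProof.wtN G pre ≤ (t + 110 * m + 40) * G.dist x u₀ ∧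
        FailPair (G := G) (ℓ := ℓ) (A := A) (p := p) (t := t) m u₀ v₀) := by
  intro n
  induction n using Nat.strong_induction_on with
  | _ n ih =>
    intro x y hdn hdle
    have hσ : (if m = 0 then 0 else 40 * t ^ m) ≤ 40 * t ^ m := by
      split <;> omega
    by_cases h0 : G.dist x y ≤ t ^ m
    · rcases hcl x y h0 with ⟨q, hq⟩ | hf
      · left
        refine ⟨q, ?_⟩
        calc t * TZProof.wtN G q
            ≤ t * G.dist x y + 110 * m * G.dist x y + (if m = 0 then 0 else 40 * t ^ m) :=
              hq
          _ ≤ t * G.dist x y + 110 * m * G.dist x y + 40 * G.dist x y + 40 * t ^ m := by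
              omega
          _ = (t + 110 * m + 40) * G.dist x y + 40 * t ^ m := by ring
      · right
        refine ⟨x, y, SimpleGraph.Walk.nil, ?_, ?_, h0, by simp, hf⟩
        · simp [SimpleGraph.dist_self]
        · simp [SimpleGraph.dist_self]
    · have hk : t ^ m ≤ G.dist x y := le_of_not_ge h0
      obtain ⟨b, hb1, hb2⟩ := TZProof.exists_mid hc x y (t ^ m) hk
      have ht1 : 1 ≤ t ^ m := Nat.one_le_iff_ne_zero.mpr (by positivity)
      rcases hcl x b (le_of_eq hb1) with ⟨q₁, hq₁⟩ | hf
      · have hw1 : t * TZProof.wtN G q₁ ≤ (t + 110 * m + 40) * t ^ m := by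
          rw [hb1] at hq₁
          calc t * TZProof.wtN G q₁
              ≤ t * t ^ m + 110 * m * t ^ m + (if m = 0 then 0 else 40 * t ^ m) := hq₁
            _ ≤ t * t ^ m + 110 * m * t ^ m + 40 * t ^ m := by omega
            _ = (t + 110 * m + 40) * t ^ m := by ring
        rcases ih (G.dist b y) (by omega) b y rfl (by omega) with ⟨q₂, hq₂⟩ |
          ⟨u₀, v₀, pre₂, e1, e2, e3, e4, hFP⟩
        · left
          refine ⟨q₁.append q₂, ?_⟩
          rw [TZProof.wtN_append, Nat.mul_add]
          calc t * TZProof.wtN G q₁ + t * TZProof.wtN G q₂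
              ≤ (t + 110 * m + 40) * t ^ m +
                ((t + 110 * m + 40) * G.dist b y + 40 * t ^ m) := add_le_add hw1 hq₂
            _ = (t + 110 * m + 40) * (t ^ m + G.dist b y) + 40 * t ^ m := by ring
            _ = (t + 110 * m + 40) * G.dist x y + 40 * t ^ m := by rw [← hb1, hb2]
        · right
          have htri1 : G.dist x u₀ ≤ G.dist x b + G.dist b u₀ := hc.dist_triangle
          have htri2 : G.dist x y ≤ G.dist x u₀ + G.dist u₀ y := hc.dist_triangle
          have hxu : G.dist x u₀ = t ^ m + G.dist b u₀ := by omega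
          refine ⟨u₀, v₀, q₁.append pre₂, by omega, e2, e3, ?_, hFP⟩
          rw [TZProof.wtN_append, Nat.mul_add, hxu]
          calc t * TZProof.wtN G q₁ + t * TZProof.wtN G pre₂
              ≤ (t + 110 * m + 40) * t ^ m + (t + 110 * m + 40) * G.dist b u₀ :=
                add_le_add hw1 e4
            _ = (t + 110 * m + 40) * (t ^ m + G.dist b u₀) := by ring
      · right
        refine ⟨x, b, SimpleGraph.Walk.nil, ?_, ?_, le_of_eq hb1, by simp, hf⟩
        · simp [SimpleGraph.dist_self]
        · omega


include hc hl hA0 hp ht in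
lemma hop_or_blocked {m : ℕ} (hm1 : m + 1 ≤ ℓ - 2) {w w' : V}
    (hwA : w ∈ A (m + 1)) (hw'A : w' ∈ A (m + 1)) :
    (∃ br : (SimpleGraph.fromEdgeSet (tzEdges G ℓ A p)).Walk w w',
        TZProof.wtN G br ≤ G.dist w w') ∨
    ((∃ ζ ∈ A (m + 2), G.dist w ζ ≤ G.dist w w') ∧
     (∃ ζ ∈ A (m + 2), G.dist w' ζ ≤ G.dist w' w)) := by
  by_cases hww : w = w'
  · subst hww
    exact Or.inl ⟨SimpleGraph.Walk.nil, by simp⟩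
  · by_cases hopL : w ∉ A (m + 2) ∧ ∀ ζ ∈ A (m + 2), G.dist w w' < G.dist w ζ
    · refine Or.inl ⟨SimpleGraph.Walk.cons
        (adj_bunch (G := G) (i := m + 1) hm1 hwA hopL.1 hw'A (Ne.symm hww) hopL.2)
        SimpleGraph.Walk.nil, by simp⟩
    · by_cases hopR : w' ∉ A (m + 2) ∧ ∀ ζ ∈ A (m + 2), G.dist w' w < G.dist w' ζ
      · refine Or.inl ⟨SimpleGraph.Walk.cons
          (adj_bunch (G := G) (i := m + 1) hm1 hw'A hopR.1 hwA hww hopR.2).symm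
          SimpleGraph.Walk.nil, by simp⟩
      · right
        constructor
        · rw [not_and_or] at hopL
          rcases hopL with hmem | hblock
          · rw [not_not] at hmem
            exact ⟨w, hmem, by simp [SimpleGraph.dist_self]⟩
          · push_neg at hblock
            obtain ⟨ζ, hζ, hd⟩ := hblock
            exact ⟨ζ, hζ, hd⟩
        · rw [not_and_or] at hopR
          rcases hopR with hmem | hblock
          · rw [not_not] at hmem
            exact ⟨w', hmem, by simp [SimpleGraph.dist_self]⟩
          · push_neg at hblock
            obtain ⟨ζ, hζ, hd⟩ := hblock
            exact ⟨ζ, hζ, hd⟩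

include hc hl hA0 hp ht in
lemma claim_succ {m : ℕ} (hm1 : m + 1 ≤ ℓ - 2)
    (hcl : Claim (G := G) (ℓ := ℓ) (A := A) (p := p) (t := t) m) :
    Claim (G := G) (ℓ := ℓ) (A := A) (p := p) (t := t) (m + 1) := by
  intro x y hdle
  have hite : (if m + 1 = 0 then (0 : ℕ) else 40 * t ^ (m + 1)) = 40 * t ^ (m + 1) := by simp
  have hT : t ^ (m + 1) = t * t ^ m := by rw [pow_succ]; ring
  have hT2 : t ^ (m + 2) = t * t ^ (m + 1) := by rw [pow_succ]; ring
  have hT7 : 7 * t ^ m ≤ t ^ (m + 1) := by rw [hT]; exact Nat.mul_le_mul_right _ ht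
  rcases march hc hl hA0 hp ht hcl (G.dist x y) x y rfl hdle with ⟨q, hq⟩ | hMF
  · left
    refine ⟨q, ?_⟩
    rw [hite]
    linarith [hq, hT7]
  · obtain ⟨u₀, v₀, pre₁, e1, e2, e3, e4, a, bb, w, w', qL, qR, fa, fb, hwA, hw'A, haw, hbw, he⟩
      := hMF
    have hvy : G.dist v₀ y = G.dist y v₀ := SimpleGraph.dist_comm
    have hdyv : G.dist y v₀ ≤ t ^ (m + 1) := by omega
    rcases march hc hl hA0 hp ht hcl (G.dist y v₀) y v₀ rfl hdyv with ⟨q₂, hq₂⟩ | hMF2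
    · -- CASE A : single zone
      rw [← fa] at he e3
      have hDb : G.dist w w' ≤ 4 * t ^ m + G.dist u₀ a + G.dist u₀ bb := by
        have t1 : G.dist w w' ≤ G.dist w a + G.dist a w' := hc.dist_triangle
        have t2 : G.dist a w' ≤ G.dist a bb + G.dist bb w' := hc.dist_triangle
        have t3 : G.dist a bb ≤ G.dist a u₀ + G.dist u₀ bb := hc.dist_triangle
        have c1 : G.dist w a = G.dist a w := SimpleGraph.dist_comm
        have c2 : G.dist a u₀ = G.dist u₀ a := SimpleGraph.dist_comm
        omega
      have heq : G.dist u₀ bb + G.dist bb v₀ = G.dist u₀ a + G.dist a v₀ := by omega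
      have hd : G.dist x u₀ + (G.dist u₀ a + G.dist a v₀) + G.dist y v₀ = G.dist x y := by
        omega
      rcases hop_or_blocked hc hl hA0 hp ht hm1 hwA hw'A with ⟨br, hbr⟩ |
        ⟨⟨ζ1, hζ1A, hζ1⟩, ⟨ζ2, hζ2A, hζ2⟩⟩
      · left
        refine ⟨pre₁.append (qL.append (br.append (qR.reverse.append q₂.reverse))), ?_⟩
        rw [hite]
        have hWval : TZProof.wtN G
            (pre₁.append (qL.append (br.append (qR.reverse.append q₂.reverse)))) =
            TZProof.wtN G pre₁ + (TZProof.wtN G qL + TZProof.wtN G qR) + TZProof.wtN G br +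
              TZProof.wtN G q₂ := by
          simp only [TZProof.wtN_append, TZProof.wtN_reverse]
          ring
        rw [hWval]
        have hbr' : t * TZProof.wtN G br ≤ t * (4 * t ^ m + G.dist u₀ a + G.dist u₀ bb) :=
          Nat.mul_le_mul_left t (le_trans hbr hDb)
        exact TZProof.arithA ht hT e4 he hbr' hq₂ heq e3 hd
      · right
        obtain ⟨wB, hwBA, hwBd, ext1, hext1⟩ := climb_step hc hl hA0 hp ht hm1 hwA hζ1A
        obtain ⟨w'B, hw'BA, hw'Bd, ext2, hext2⟩ := climb_step hc hl hA0 hp ht hm1 hw'A hζ2A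
        have hcm : G.dist w' w = G.dist w w' := SimpleGraph.dist_comm
        have ta1 : G.dist x a ≤ G.dist x u₀ + G.dist u₀ a := hc.dist_triangle
        have ta2 : G.dist a y ≤ G.dist a v₀ + G.dist v₀ y := hc.dist_triangle
        have ta3 : G.dist x y ≤ G.dist x a + G.dist a y := hc.dist_triangle
        have tb1 : G.dist x bb ≤ G.dist x u₀ + G.dist u₀ bb := hc.dist_triangle
        have tb2 : G.dist bb y ≤ G.dist bb v₀ + G.dist v₀ y := hc.dist_triangle
        have tb3 : G.dist x y ≤ G.dist x bb + G.dist bb y := hc.dist_triangle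
        have hxa : G.dist x a = G.dist x u₀ + G.dist u₀ a := by omega
        have hay : G.dist a y = G.dist a v₀ + G.dist v₀ y := by omega
        have hxb : G.dist x bb = G.dist x u₀ + G.dist u₀ bb := by omega
        have hby : G.dist bb y = G.dist bb v₀ + G.dist v₀ y := by omega
        have taw : G.dist a wB ≤ G.dist a w + G.dist w wB := hc.dist_triangle
        have tbw : G.dist bb w'B ≤ G.dist bb w' + G.dist w' w'B := hc.dist_triangle
        refine ⟨a, bb, wB, w'B, pre₁.append (qL.append ext1), q₂.append (qR.append ext2),
          by omega, by omega, hwBA, hw'BA, by omega, by omega, ?_⟩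
        have hWsum : TZProof.wtN G (pre₁.append (qL.append ext1)) +
            TZProof.wtN G (q₂.append (qR.append ext2)) =
            TZProof.wtN G pre₁ + (TZProof.wtN G qL + TZProof.wtN G qR) + TZProof.wtN G ext1 +
              TZProof.wtN G q₂ + TZProof.wtN G ext2 := by
          simp only [TZProof.wtN_append]
          ring
        rw [hWsum, hxa, hby, hvy]
        exact TZProof.arithAblocked ht hT hT2 e4 he hq₂ (le_trans hext1 hζ1)
          (by omega) hDb heq e3 hd
    · -- CASE B : two zones
      obtain ⟨r₀, r₁, pre₂, g1, g2, g3, g4, a2, b2, w₂, w₂', qL2, qR2, ka, kb, hw₂A, hw₂'A,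
        ha2w, hb2w, he2⟩ := hMF2
      rw [← fa] at he e3
      rw [← ka] at he2 g3
      have hrb : G.dist bb v₀ ≤ G.dist u₀ a + G.dist a v₀ := by omega
      have hrb2 : G.dist b2 r₁ ≤ G.dist r₀ a2 + G.dist a2 r₁ := by omega
      have hd : G.dist x u₀ + (G.dist u₀ a + G.dist a v₀) + G.dist r₁ v₀ +
          (G.dist r₀ a2 + G.dist a2 r₁) + G.dist y r₀ = G.dist x y := by omega
      have hDb : G.dist w w₂ ≤ 4 * t ^ m + G.dist a v₀ + G.dist r₁ v₀ + G.dist a2 r₁ := by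
        have t1 : G.dist w w₂ ≤ G.dist w a + G.dist a w₂ := hc.dist_triangle
        have t2 : G.dist a w₂ ≤ G.dist a a2 + G.dist a2 w₂ := hc.dist_triangle
        have t3 : G.dist a a2 ≤ G.dist a v₀ + G.dist v₀ a2 := hc.dist_triangle
        have t4 : G.dist v₀ a2 ≤ G.dist v₀ r₁ + G.dist r₁ a2 := hc.dist_triangle
        have c1 : G.dist w a = G.dist a w := SimpleGraph.dist_comm
        have c2 : G.dist v₀ r₁ = G.dist r₁ v₀ := SimpleGraph.dist_comm
        have c3 : G.dist r₁ a2 = G.dist a2 r₁ := SimpleGraph.dist_comm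
        omega
      rcases hop_or_blocked hc hl hA0 hp ht hm1 hwA hw₂A with ⟨br, hbr⟩ |
        ⟨⟨ζ1, hζ1A, hζ1⟩, ⟨ζ2, hζ2A, hζ2⟩⟩
      · left
        refine ⟨pre₁.append (qL.append (br.append (qL2.reverse.append pre₂.reverse))), ?_⟩
        rw [hite]
        have hWle : TZProof.wtN G
            (pre₁.append (qL.append (br.append (qL2.reverse.append pre₂.reverse)))) ≤
            TZProof.wtN G pre₁ + (TZProof.wtN G qL + TZProof.wtN G qR) + TZProof.wtN G br +
              (TZProof.wtN G qL2 + TZProof.wtN G qR2) + TZProof.wtN G pre₂ := by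
          simp only [TZProof.wtN_append, TZProof.wtN_reverse]
          omega
        have hbr' : t * TZProof.wtN G br ≤
            t * (4 * t ^ m + G.dist a v₀ + G.dist r₁ v₀ + G.dist a2 r₁) :=
          Nat.mul_le_mul_left t (le_trans hbr hDb)
        calc t * TZProof.wtN G
              (pre₁.append (qL.append (br.append (qL2.reverse.append pre₂.reverse))))
            ≤ t * (TZProof.wtN G pre₁ + (TZProof.wtN G qL + TZProof.wtN G qR) +
                TZProof.wtN G br + (TZProof.wtN G qL2 + TZProof.wtN G qR2) +
                TZProof.wtN G pre₂) := Nat.mul_le_mul_left t hWle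
          _ ≤ t * G.dist x y + 110 * (m + 1) * G.dist x y + 40 * t ^ (m + 1) :=
              TZProof.arithB ht hT e4 he hbr' he2 g4 hrb hrb2 e3 g3 hd
      · right
        obtain ⟨wB, hwBA, hwBd, ext1, hext1⟩ := climb_step hc hl hA0 hp ht hm1 hwA hζ1A
        obtain ⟨w₂B, hw₂BA, hw₂Bd, ext2, hext2⟩ := climb_step hc hl hA0 hp ht hm1 hw₂A hζ2A
        have hcm : G.dist w₂ w = G.dist w w₂ := SimpleGraph.dist_comm
        have ta1 : G.dist x a ≤ G.dist x u₀ + G.dist u₀ a := hc.dist_triangle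
        have ta2 : G.dist a y ≤ G.dist a v₀ + G.dist v₀ y := hc.dist_triangle
        have ta3 : G.dist x y ≤ G.dist x a + G.dist a y := hc.dist_triangle
        have hxa : G.dist x a = G.dist x u₀ + G.dist u₀ a := by omega
        have tb1 : G.dist x a2 ≤ G.dist x v₀ + G.dist v₀ a2 := hc.dist_triangle
        have tb2 : G.dist x v₀ ≤ G.dist x u₀ + G.dist u₀ v₀ := hc.dist_triangle
        have tb3 : G.dist v₀ a2 ≤ G.dist v₀ r₁ + G.dist r₁ a2 := hc.dist_triangle
        have tb4 : G.dist a2 y ≤ G.dist a2 r₀ + G.dist r₀ y := hc.dist_triangle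
        have tb5 : G.dist x y ≤ G.dist x a2 + G.dist a2 y := hc.dist_triangle
        have c2 : G.dist v₀ r₁ = G.dist r₁ v₀ := SimpleGraph.dist_comm
        have c3 : G.dist r₁ a2 = G.dist a2 r₁ := SimpleGraph.dist_comm
        have c4 : G.dist a2 r₀ = G.dist r₀ a2 := SimpleGraph.dist_comm
        have c5 : G.dist r₀ y = G.dist y r₀ := SimpleGraph.dist_comm
        have ha2y : G.dist a2 y = G.dist y r₀ + G.dist r₀ a2 := by omega
        have taw : G.dist a wB ≤ G.dist a w + G.dist w wB := hc.dist_triangle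
        have tbw : G.dist a2 w₂B ≤ G.dist a2 w₂ + G.dist w₂ w₂B := hc.dist_triangle
        refine ⟨a, a2, wB, w₂B, pre₁.append (qL.append ext1), pre₂.append (qL2.append ext2),
          by omega, by omega, hwBA, hw₂BA, by omega, by omega, ?_⟩
        have hWsum : TZProof.wtN G (pre₁.append (qL.append ext1)) +
            TZProof.wtN G (pre₂.append (qL2.append ext2)) ≤
            TZProof.wtN G pre₁ + (TZProof.wtN G qL + TZProof.wtN G qR) + TZProof.wtN G ext1 +
              TZProof.wtN G pre₂ + (TZProof.wtN G qL2 + TZProof.wtN G qR2) +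
              TZProof.wtN G ext2 := by
          simp only [TZProof.wtN_append]
          omega
        rw [hxa, ha2y]
        calc t * (TZProof.wtN G (pre₁.append (qL.append ext1)) +
              TZProof.wtN G (pre₂.append (qL2.append ext2)))
            ≤ t * (TZProof.wtN G pre₁ + (TZProof.wtN G qL + TZProof.wtN G qR) +
                TZProof.wtN G ext1 + TZProof.wtN G pre₂ +
                (TZProof.wtN G qL2 + TZProof.wtN G qR2) + TZProof.wtN G ext2) :=
              Nat.mul_le_mul_left t hWsum
          _ ≤ t * ((G.dist x u₀ + G.dist u₀ a) + (G.dist y r₀ + G.dist r₀ a2)) +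
                110 * (m + 1) * G.dist x y + 15 * t ^ (m + 1 + 1) :=
              TZProof.arithBblocked ht hT hT2 e4 he he2 g4 (le_trans hext1 hζ1)
                (by omega) hDb hrb hrb2 e3 g3 hdle hd


include hc hl hA0 hp ht in
lemma claim_all : ∀ m, m ≤ ℓ - 2 → Claim (G := G) (ℓ := ℓ) (A := A) (p := p) (t := t) m := by
  intro m
  induction m with
  | zero => exact fun _ => claim_zero hc hl hA0 hp ht
  | succ m ih =>
      intro hm1
      exact claim_succ hc hl hA0 hp ht hm1 (ih (by omega))

end Hier

/-- **Emulator segment dichotomy (Lemma 3.1).**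
There are absolute constants `c, c' ≥ 1` such that for every Thorup–Zwick hierarchy over a
finite connected simple graph `G`, every integer `t ≥ 7`, every `i ≤ ℓ-2` and all vertices
`x, y` with `d_G(x,y) ≤ t^i`, either the segment is successful, i.e. the emulator `H`
contains a path from `x` to `y` of length at most `d_G(x,y) + c·i·t^(i-1)`, or it fails,
i.e. `d_G(x, p_{i+1}(x)) ≤ c'·t^i`. -/
theorem emulator_segment_dichotomy :
    ∃ c c' : ℝ, 1 ≤ c ∧ 1 ≤ c' ∧
      ∀ (V : Type) [Fintype V] (G : SimpleGraph V), G.Connected →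
      ∀ ℓ : ℕ, 2 ≤ ℓ →
      ∀ A : ℕ → Set V,
        A 0 = Set.univ → A ℓ = ∅ → (∀ i, A (i + 1) ⊆ A i) →
        (∀ i ≤ ℓ - 1, (A i).Nonempty) →
      ∀ p : ℕ → V → V,
        (∀ i, 1 ≤ i → i ≤ ℓ - 1 → ∀ v : V,
          p i v ∈ A i ∧ ∀ z ∈ A i, G.dist v (p i v) ≤ G.dist v z) →
      ∀ t : ℕ, 7 ≤ t →
      ∀ i ≤ ℓ - 2, ∀ x y : V,
        (G.dist x y : ℝ) ≤ (t : ℝ) ^ i →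
        (∃ q : (SimpleGraph.fromEdgeSet (tzEdges G ℓ A p)).Walk x y,
            walkWeight (fun a b => (G.dist a b : ℝ)) q ≤
              (G.dist x y : ℝ) + c * (i : ℝ) * (t : ℝ) ^ (i - 1)) ∨
        (G.dist x (p (i + 1) x) : ℝ) ≤ c' * (t : ℝ) ^ i := by
  refine ⟨150, 3, by norm_num, by norm_num, ?_⟩
  intro V _inst G hconn ℓ hℓ A hA0 hAl hmono hne p hp t ht i hi x y hxy
  have ht0 : 0 < t := by omega
  have hnat : G.dist x y ≤ t ^ i := by
    have : ((G.dist x y : ℕ) : ℝ) ≤ ((t ^ i : ℕ) : ℝ) := by push_cast; exact hxy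
    exact_mod_cast this
  rcases claim_all hconn hℓ hA0 hp ht i hi x y hnat with ⟨q, hq⟩ |
    ⟨a, b, w, w', qL, qR, fa, fb, hwA, hw'A, haw, hbw, he⟩
  · left
    refine ⟨q, ?_⟩
    rw [TZProof.walkWeight_eq]
    have hwt : TZProof.wtN G q ≤ G.dist x y + 150 * i * t ^ (i - 1) := by
      rcases Nat.eq_zero_or_pos i with hi0 | hipos
      · subst hi0
        have h0 : t * TZProof.wtN G q ≤ t * G.dist x y := by simpa using hq
        have h1 := Nat.le_of_mul_le_mul_left h0 ht0
        omega
      · obtain ⟨j, rfl⟩ : ∃ j, i = j + 1 := ⟨i - 1, by omega⟩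
        have hite : (if j + 1 = 0 then (0 : ℕ) else 40 * t ^ (j + 1)) = 40 * t ^ (j + 1) := by
          simp
        rw [hite] at hq
        have hTT : t ^ (j + 1) = t * t ^ j := by rw [pow_succ]; ring
        have hstep : t * TZProof.wtN G q ≤ t * (G.dist x y + 150 * (j + 1) * t ^ j) := by
          have h1 : 110 * (j + 1) * G.dist x y ≤ 110 * (j + 1) * t ^ (j + 1) :=
            Nat.mul_le_mul_left _ hnat
          have h2 : 110 * (j + 1) * t ^ (j + 1) + 40 * t ^ (j + 1) ≤
              150 * (j + 1) * t ^ (j + 1) := by nlinarith [Nat.zero_le (j * t ^ (j + 1))]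
          calc t * TZProof.wtN G q
              ≤ t * G.dist x y + 110 * (j + 1) * G.dist x y + 40 * t ^ (j + 1) := hq
            _ ≤ t * G.dist x y + 150 * (j + 1) * t ^ (j + 1) := by omega
            _ = t * (G.dist x y + 150 * (j + 1) * t ^ j) := by rw [hTT]; ring
        have h3 := Nat.le_of_mul_le_mul_left hstep ht0
        simpa [Nat.add_sub_cancel] using h3
    calc ((TZProof.wtN G q : ℕ) : ℝ) ≤ ((G.dist x y + 150 * i * t ^ (i - 1) : ℕ) : ℝ) := by
          exact_mod_cast hwt
      _ = (G.dist x y : ℝ) + 150 * (i : ℝ) * (t : ℝ) ^ (i - 1) := by push_cast; ring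
  · right
    have hi1 : 1 ≤ i + 1 := by omega
    have hi2 : i + 1 ≤ ℓ - 1 := by omega
    have hopt := (hp (i + 1) hi1 hi2 x).2 w hwA
    have htri : G.dist x w ≤ G.dist x a + G.dist a w := hconn.dist_triangle
    have hnat2 : G.dist x (p (i + 1) x) ≤ 3 * t ^ i := by omega
    calc (G.dist x (p (i + 1) x) : ℝ) ≤ ((3 * t ^ i : ℕ) : ℝ) := by exact_mod_cast hnat2
      _ = 3 * (t : ℝ) ^ i := by push_cast; ring
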